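/- In the Rayleigh case with Ψ having eigenvalues λ_1,…,λ_N ≥ 0, the NMSE equals (σ²/(τρ)) · Σ_i λ_i/(q λ_i + σ²/(τρ)) / Σ_i λ_i, which is strictly decreasing in the training power τρ when Ψ ≠ 0. -/

import Mathlib

open Matrix
open scoped Matrix ComplexOrder

section Aux
variable {N : ℕ}

lemma key_trace (Ψ : Matrix (Fin N) (Fin N) ℂ) (hΨ : Ψ.PosSemidef) (q c : ℝ)
    (hq : 0 < q) (hc : 0 < c) :
    (Ψ * ((q : ℂ) • Ψ + (c : ℂ) • (1 : Matrix (Fin N) (Fin N) ℂ))⁻¹ * Ψ).trace =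
      ((∑ i, (hΨ.1.eigenvalues i)^2 / (q * hΨ.1.eigenvalues i + c) : ℝ) : ℂ) := by
  classical
  set l := hΨ.1.eigenvalues with hl
  set U : Matrix (Fin N) (Fin N) ℂ := (hΨ.1.eigenvectorUnitary : Matrix (Fin N) (Fin N) ℂ) with hU
  have hUU : U * star U = 1 := Matrix.mem_unitaryGroup_iff.mp (hΨ.1.eigenvectorUnitary).2
  have hUU' : star U * U = 1 := Matrix.mem_unitaryGroup_iff'.mp (hΨ.1.eigenvectorUnitary).2
  have hspec : Ψ = U * diagonal (fun i => (l i : ℂ)) * star U := by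
    have h := hΨ.1.spectral_theorem
    rw [Unitary.conjStarAlgAut_apply] at h
    exact h
  set D : Matrix (Fin N) (Fin N) ℂ := diagonal (fun i => (l i : ℂ)) with hD
  have hpos : ∀ i, 0 < q * l i + c := fun i =>
    add_pos_of_nonneg_of_pos (mul_nonneg hq.le (hΨ.eigenvalues_nonneg i)) hc
  have h0 : ∀ i, ((q * l i + c : ℝ) : ℂ) ≠ 0 := fun i => by exact_mod_cast (hpos i).ne'
  set M : Matrix (Fin N) (Fin N) ℂ := diagonal (fun i => ((q * l i + c : ℝ) : ℂ)) with hM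
  set Minv : Matrix (Fin N) (Fin N) ℂ := diagonal (fun i => ((q * l i + c : ℝ) : ℂ)⁻¹) with hMinv
  have hMM : M * Minv = 1 := by
    rw [hM, hMinv, diagonal_mul_diagonal, ← diagonal_one]
    exact congrArg diagonal (funext fun i => mul_inv_cancel₀ (h0 i))
  have hMdec : M = (q : ℂ) • D + (c : ℂ) • 1 := by
    ext i j
    by_cases h : i = j
    · subst h; push_cast; simp [hM, hD, Matrix.one_apply]
    · simp [hM, hD, Matrix.one_apply, diagonal_apply_ne _ h, h]
  have hsum : (q : ℂ) • Ψ + (c : ℂ) • (1 : Matrix (Fin N) (Fin N) ℂ) = U * M * star U := by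
    calc (q : ℂ) • Ψ + (c : ℂ) • (1 : Matrix (Fin N) (Fin N) ℂ)
        = (q : ℂ) • (U * D * star U) + (c : ℂ) • (U * 1 * star U) := by
          rw [← hspec, mul_one, hUU]
      _ = U * ((q : ℂ) • D + (c : ℂ) • 1) * star U := by
          simp [Matrix.mul_add, Matrix.add_mul, mul_smul_comm, smul_mul_assoc]
      _ = U * M * star U := by rw [hMdec]
  have hinv : ((q : ℂ) • Ψ + (c : ℂ) • (1 : Matrix (Fin N) (Fin N) ℂ))⁻¹ = U * Minv * star U := by
    apply Matrix.inv_eq_right_inv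
    rw [hsum]
    calc U * M * star U * (U * Minv * star U)
        = U * (M * (star U * U) * Minv) * star U := by noncomm_ring
      _ = 1 := by rw [hUU', mul_one, hMM, mul_one, hUU]
  have hprod : Ψ * (U * Minv * star U) * Ψ = U * (D * Minv * D) * star U := by
    rw [hspec]
    calc U * D * star U * (U * Minv * star U) * (U * D * star U)
        = U * (D * (star U * U) * Minv * (star U * U) * D) * star U := by noncomm_ring
      _ = U * (D * Minv * D) * star U := by rw [hUU']; noncomm_ring
  rw [hinv, hprod, Matrix.trace_mul_cycle, ← Matrix.mul_assoc, hUU', Matrix.one_mul]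
  rw [hD, hMinv, diagonal_mul_diagonal, diagonal_mul_diagonal, Matrix.trace_diagonal]
  push_cast
  apply Finset.sum_congr rfl
  intro i _
  field_simp

lemma exists_pos_eigenvalue (Ψ : Matrix (Fin N) (Fin N) ℂ) (hΨ : Ψ.PosSemidef) (hΨ0 : Ψ ≠ 0) :
    ∃ i, 0 < hΨ.1.eigenvalues i := by
  classical
  by_contra h
  push_neg at h
  have hz : ∀ i, hΨ.1.eigenvalues i = 0 := fun i =>
    le_antisymm (h i) (hΨ.eigenvalues_nonneg i)
  apply hΨ0
  have hspec := hΨ.1.spectral_theorem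
  rw [hspec]
  have : diagonal (RCLike.ofReal ∘ hΨ.1.eigenvalues) = (0 : Matrix (Fin N) (Fin N) ℂ) := by
    rw [← diagonal_zero]
    exact congrArg diagonal (funext fun i => by simp [Function.comp, hz i])
  rw [this, map_zero]

end Aux

/-- In the Rayleigh case, with Ψ Hermitian PSD of eigenvalues λ_i ≥ 0, the NMSE
1 − q tr(ΨQΨ)/tr(Ψ) equals (σ²/(τρ)) Σ_i λ_i/(qλ_i + σ²/(τρ)) / Σ_i λ_i, and is
strictly decreasing in the training power p = τρ when Ψ ≠ 0. -/
theorem nmse_eigenvalue_formula_and_monotone {N : ℕ}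
    (Ψ : Matrix (Fin N) (Fin N) ℂ) (hΨ : Ψ.PosSemidef) (hΨ0 : Ψ ≠ 0)
    (q σ2 : ℝ) (hq : 0 < q) (hσ : 0 < σ2)
    (NMSE : ℝ → ℂ)
    (hN : ∀ p : ℝ, NMSE p = 1 - (q : ℂ) *
      (Ψ * ((q : ℂ) • Ψ + (((σ2 / p : ℝ)) : ℂ) • (1 : Matrix (Fin N) (Fin N) ℂ))⁻¹ *
        Ψ).trace / Ψ.trace) :
    (∀ p : ℝ, 0 < p → NMSE p =
      ((((σ2 / p) * ∑ i, hΨ.1.eigenvalues i / (q * hΨ.1.eigenvalues i + σ2 / p)) /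
        ∑ i, hΨ.1.eigenvalues i : ℝ) : ℂ)) ∧
    (∀ p1 p2 : ℝ, 0 < p1 → p1 < p2 → (NMSE p2).re < (NMSE p1).re) := by
  classical
  set l := hΨ.1.eigenvalues with hl
  have hlnn : ∀ i, 0 ≤ l i := fun i => hΨ.eigenvalues_nonneg i
  obtain ⟨i0, hi0⟩ := exists_pos_eigenvalue Ψ hΨ hΨ0
  set T : ℝ := ∑ i, l i with hT
  have hTpos : 0 < T := by
    apply Finset.sum_pos' (fun i _ => hlnn i) ⟨i0, Finset.mem_univ i0, hi0⟩
  have htr : Ψ.trace = ((T : ℝ) : ℂ) := by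
    set U : Matrix (Fin N) (Fin N) ℂ := (hΨ.1.eigenvectorUnitary : Matrix (Fin N) (Fin N) ℂ)
    have hUU' : star U * U = 1 := Matrix.mem_unitaryGroup_iff'.mp (hΨ.1.eigenvectorUnitary).2
    have hspec : Ψ = U * diagonal (fun i => (l i : ℂ)) * star U := by
      have h := hΨ.1.spectral_theorem
      rw [Unitary.conjStarAlgAut_apply] at h
      exact h
    rw [hspec, Matrix.trace_mul_cycle, hUU', Matrix.one_mul, Matrix.trace_diagonal]
    rw [hT]
    push_cast
    rfl
  have hpos : ∀ (c : ℝ), 0 < c → ∀ i, 0 < q * l i + c := fun c hc i =>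
    add_pos_of_nonneg_of_pos (mul_nonneg hq.le (hlnn i)) hc
  have part1 : ∀ p : ℝ, 0 < p → NMSE p =
      ((((σ2 / p) * ∑ i, l i / (q * l i + σ2 / p)) / T : ℝ) : ℂ) := by
    intro p hp
    set c : ℝ := σ2 / p with hc
    have hcpos : 0 < c := div_pos hσ hp
    have hkey : T - q * ∑ i, (l i)^2 / (q * l i + c) = c * ∑ i, l i / (q * l i + c) := by
      rw [Finset.mul_sum, Finset.mul_sum, ← Finset.sum_sub_distrib]
      apply Finset.sum_congr rfl
      intro i _
      have hd := hpos c hcpos i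
      rw [mul_div_assoc', mul_div_assoc', eq_div_iff hd.ne', sub_mul, div_mul_cancel₀ _ hd.ne']
      ring
    have hreal : (1 : ℝ) - q * (∑ i, (l i)^2 / (q * l i + c)) / T =
        (c * ∑ i, l i / (q * l i + c)) / T := by
      rw [← hkey]
      field_simp
    rw [hN p, key_trace Ψ hΨ q c hq hcpos, htr, ← hreal]
    push_cast
    ring
  refine ⟨part1, ?_⟩
  intro p1 p2 hp1 h12
  have hp2 : 0 < p2 := hp1.trans h12
  rw [part1 p1 hp1, part1 p2 hp2, Complex.ofReal_re, Complex.ofReal_re]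
  set c1 : ℝ := σ2 / p1
  set c2 : ℝ := σ2 / p2
  have hc1 : 0 < c1 := div_pos hσ hp1
  have hc2 : 0 < c2 := div_pos hσ hp2
  have hcc : c2 < c1 := div_lt_div_of_pos_left hσ hp1 h12
  rw [div_lt_div_iff_of_pos_right hTpos]
  rw [Finset.mul_sum, Finset.mul_sum]
  apply Finset.sum_lt_sum
  · intro i _
    have hd1 := add_pos_of_nonneg_of_pos (mul_nonneg hq.le (hlnn i)) hc1
    have hd2 := add_pos_of_nonneg_of_pos (mul_nonneg hq.le (hlnn i)) hc2
    rw [mul_div_assoc', mul_div_assoc', div_le_div_iff₀ hd2 hd1]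
    nlinarith [mul_nonneg (mul_nonneg (sub_nonneg.mpr hcc.le) hq.le) (sq_nonneg (l i)),
      hlnn i]
  · refine ⟨i0, Finset.mem_univ i0, ?_⟩
    have hd1 := add_pos_of_nonneg_of_pos (mul_nonneg hq.le (hlnn i0)) hc1
    have hd2 := add_pos_of_nonneg_of_pos (mul_nonneg hq.le (hlnn i0)) hc2
    rw [mul_div_assoc', mul_div_assoc', div_lt_div_iff₀ hd2 hd1]
    have hi0' : 0 < l i0 := hi0
    nlinarith [mul_pos (mul_pos (sub_pos.mpr hcc) hq) (mul_pos hi0' hi0')]
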